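/- arXiv:1904.13223 — 4 statements merged into one kernel-verified Lean document; each statement's English description precedes it below -/
import Mathlib

section
/- Every finite ultrametric space of n points embeds into Euclidean space with squared Euclidean distances equal to the ultrametric distances: if d is an ultrametric on a finite set O of size n, then there exist vectors y_1, ..., y_n ∈ ℝ^n such that ‖y_i − y_j‖² = d(i,j) for all i, j. -/
open Finset

/-- The quadratic form of the indicator matrix of an equivalence relation is nonneg. -/
lemma equiv_qf_nonneg {O : Type*} [Fintype O] (r : O → O → Prop) [DecidableRel r]
    (hrefl : ∀ i, r i i) (hsymm : ∀ i j, r i j → r j i)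
    (htrans : ∀ i j k, r i j → r j k → r i k) (x : O → ℝ) :
    0 ≤ ∑ i, ∑ j, x i * x j * (if r i j then (1:ℝ) else 0) := by
  classical
  set cl : O → Finset O := fun i => univ.filter (r i) with hcl
  have key : ∀ i j, r i j ↔ cl i = cl j := by
    intro i j
    constructor
    · intro h
      ext k
      simp only [hcl, mem_filter, mem_univ, true_and]
      exact ⟨fun hik => htrans _ _ _ (hsymm _ _ h) hik, fun hjk => htrans _ _ _ h hjk⟩
    · intro h
      have : j ∈ cl j := by simp [hcl, hrefl]
      rw [← h] at this
      simpa [hcl] using this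
  set F : Finset O → ℝ := fun s => ∑ j ∈ univ.filter (fun j => cl j = s), x j with hF
  have inner : ∀ i, ∑ j, x i * x j * (if r i j then (1:ℝ) else 0) = x i * F (cl i) := by
    intro i
    rw [hF]
    rw [Finset.mul_sum]
    rw [Finset.sum_filter]
    apply Finset.sum_congr rfl
    intro j _
    by_cases h : r i j
    · simp [h, (key i j).mp h, eq_comm]
    · have : ¬ cl j = cl i := fun hc => h ((key i j).mpr hc.symm)
      simp [h, this]
  calc (0:ℝ) ≤ ∑ s ∈ univ.image cl, F s * F s := by
        apply Finset.sum_nonneg; intro s _; exact mul_self_nonneg _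
    _ = ∑ s ∈ univ.image cl, ∑ i ∈ univ.filter (fun i => cl i = s), x i * F (cl i) := by
        apply Finset.sum_congr rfl
        intro s _
        rw [hF]
        rw [Finset.sum_mul]
        apply Finset.sum_congr rfl
        intro i hi
        rw [(Finset.mem_filter.mp hi).2]
    _ = ∑ i, x i * F (cl i) :=
        Finset.sum_fiberwise_of_maps_to (fun i _ => Finset.mem_image_of_mem cl (mem_univ i)) _
    _ = ∑ i, ∑ j, x i * x j * (if r i j then (1:ℝ) else 0) := by
        apply Finset.sum_congr rfl
        intro i _
        exact (inner i).symm

/-- Key positive semidefiniteness lemma, by induction on the number of values of `d`. -/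
lemma psd_aux {O : Type*} [Fintype O] : ∀ (n : ℕ) (d : O → O → ℝ),
    (Finset.image₂ d Finset.univ Finset.univ).card ≤ n →
    (∀ i, d i i = 0) → (∀ i j, 0 ≤ d i j) → (∀ i j, d i j = d j i) →
    (∀ i j k, d i j ≤ max (d i k) (d k j)) →
    ∀ D : ℝ, (∀ i j, d i j ≤ D) → ∀ x : O → ℝ,
    0 ≤ ∑ i, ∑ j, x i * x j * (D - d i j) := by
  classical
  intro n
  induction n with
  | zero =>
    intro d hcard _ _ _ _ D hD x
    cases isEmpty_or_nonempty O with
    | inl h => simp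
    | inr h =>
      exfalso
      obtain ⟨i⟩ := h
      have : d i i ∈ Finset.image₂ d univ univ := mem_image₂_of_mem (mem_univ i) (mem_univ i)
      have := Finset.card_pos.mpr ⟨_, this⟩
      omega
  | succ n ih =>
    intro d hcard hii hnn hsym hult D hD x
    cases isEmpty_or_nonempty O with
    | inl h => simp
    | inr h =>
    set V : Finset ℝ := Finset.image₂ d univ univ with hV
    have hVne : V.Nonempty := by
      obtain ⟨i⟩ := h
      exact ⟨d i i, mem_image₂_of_mem (mem_univ i) (mem_univ i)⟩
    set M := V.max' hVne with hM
    have hmemV : ∀ i j, d i j ∈ V := fun i j => mem_image₂_of_mem (mem_univ i) (mem_univ j)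
    have hdM : ∀ i j, d i j ≤ M := fun i j => V.le_max' _ (hmemV i j)
    by_cases hsub : (V \ {M}).Nonempty
    · -- c = second largest capped value
      set c := (V \ {M}).max' hsub with hc
      have hcV : c ∈ V \ {M} := (V \ {M}).max'_mem hsub
      have hcM : c < M := by
        rcases Finset.mem_sdiff.mp hcV with ⟨h1, h2⟩
        exact lt_of_le_of_ne (V.le_max' _ h1) (by simpa using h2)
      have hcnn : 0 ≤ c := by
        rcases Finset.mem_sdiff.mp hcV with ⟨h1, _⟩
        rcases Finset.mem_image₂.mp h1 with ⟨a, _, b, _, hab⟩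
        exact hab ▸ hnn a b
      have hle_c : ∀ i j, d i j < M → d i j ≤ c := by
        intro i j hlt
        apply (V \ {M}).le_max' _
        rw [Finset.mem_sdiff]
        exact ⟨hmemV i j, by simp [hlt.ne]⟩
      -- capped distance
      set d' : O → O → ℝ := fun i j => min (d i j) c with hd'
      have hd'ii : ∀ i, d' i i = 0 := fun i => by simp [hd', hii i, hcnn]
      have hd'nn : ∀ i j, 0 ≤ d' i j := fun i j => le_min (hnn i j) hcnn
      have hd'sym : ∀ i j, d' i j = d' j i := fun i j => by simp [hd', hsym i j]
      have hd'ult : ∀ i j k, d' i j ≤ max (d' i k) (d' k j) := by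
        intro i j k
        calc d' i j ≤ min (max (d i k) (d k j)) c := min_le_min (hult i j k) le_rfl
          _ = max (d' i k) (d' k j) := min_max_distrib_right _ _ _
      have hd'card : (Finset.image₂ d' univ univ).card ≤ n := by
        have hsubset : Finset.image₂ d' univ univ ⊆ V \ {M} := by
          intro v hv
          rcases Finset.mem_image₂.mp hv with ⟨a, _, b, _, hab⟩
          rw [Finset.mem_sdiff]
          by_cases hab' : d a b ≤ c
          · have : d' a b = d a b := min_eq_left hab'
            rw [← hab, this]
            exact ⟨hmemV a b, by
              simp only [Finset.mem_singleton]
              exact ne_of_lt (lt_of_le_of_lt hab' hcM)⟩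
          · have : d' a b = c := min_eq_right (le_of_not_ge hab')
            rw [← hab, this]
            exact ⟨(Finset.mem_sdiff.mp hcV).1, (Finset.mem_sdiff.mp hcV).2⟩
        have h1 : (Finset.image₂ d' univ univ).card ≤ (V \ {M}).card :=
          Finset.card_le_card hsubset
        have h2 : (V \ {M}).card < V.card :=
          Finset.card_lt_card (Finset.sdiff_ssubset
            (Finset.singleton_subset_iff.mpr (V.max'_mem hVne)) (Finset.singleton_nonempty M))
        omega
      have hMD : M ≤ D := by
        rcases Finset.mem_image₂.mp (V.max'_mem hVne) with ⟨a, _, b, _, hab⟩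
        have : M = d a b := hab.symm
        linarith [hD a b]
      -- decomposition of the quadratic form
      have hdecomp : ∀ i j, D - d i j =
          ((D - (M - c)) - d' i j) + (M - c) * (if d i j ≤ c then (1:ℝ) else 0) := by
        intro i j
        by_cases hij : d i j ≤ c
        · have : d' i j = d i j := min_eq_left hij
          rw [this, if_pos hij]; ring
        · have heq : d i j = M := by
            by_contra hne
            exact hij (hle_c i j (lt_of_le_of_ne (hdM i j) hne))
          have : d' i j = c := min_eq_right (le_of_not_ge hij)
          rw [this, if_neg hij, heq]; ring
      have split : ∑ i, ∑ j, x i * x j * (D - d i j) =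
          (∑ i, ∑ j, x i * x j * ((D - (M - c)) - d' i j)) +
          (M - c) * ∑ i, ∑ j, x i * x j * (if d i j ≤ c then (1:ℝ) else 0) := by
        rw [Finset.mul_sum, ← Finset.sum_add_distrib]
        apply Finset.sum_congr rfl
        intro i _
        rw [Finset.mul_sum, ← Finset.sum_add_distrib]
        apply Finset.sum_congr rfl
        intro j _
        rw [hdecomp i j]
        ring
      rw [split]
      apply add_nonneg
      · apply ih d' hd'card hd'ii hd'nn hd'sym hd'ult
        · intro i j
          calc d' i j ≤ c := min_le_right _ _
            _ ≤ D - (M - c) := by linarith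
      · apply mul_nonneg (by linarith)
        apply equiv_qf_nonneg (fun i j => d i j ≤ c)
        · intro i; rw [hii i]; exact hcnn
        · intro i j hij; rw [hsym]; exact hij
        · intro i j k hij hjk
          calc d i k ≤ max (d i j) (d j k) := hult i k j
            _ ≤ c := max_le hij hjk
    · -- V = {M}, so d ≡ 0
      have hVM : V = {M} := by
        apply Finset.Subset.antisymm
        · intro v hv
          rw [Finset.mem_singleton]
          by_contra hne
          exact hsub ⟨v, Finset.mem_sdiff.mpr ⟨hv, by simpa using hne⟩⟩
        · exact Finset.singleton_subset_iff.mpr (V.max'_mem hVne)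
      have hM0 : M = 0 := by
        obtain ⟨i⟩ := h
        have : d i i ∈ V := hmemV i i
        rw [hVM, Finset.mem_singleton] at this
        rw [← this, hii]
      have hd0 : ∀ i j, d i j = 0 := by
        intro i j
        have : d i j ∈ V := hmemV i j
        rw [hVM, Finset.mem_singleton] at this
        rw [this, hM0]
      have hD0 : 0 ≤ D := by
        obtain ⟨i⟩ := h
        have := hD i i
        rw [hii] at this
        exact this
      have : ∑ i, ∑ j, x i * x j * (D - d i j) = D * (∑ i, x i) ^ 2 := by
        rw [sq, Finset.sum_mul_sum]
        rw [Finset.mul_sum]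
        apply Finset.sum_congr rfl
        intro i _
        rw [Finset.mul_sum]
        apply Finset.sum_congr rfl
        intro j _
        rw [hd0 i j]
        ring
      rw [this]
      positivity

theorem ultrametric_sq_euclidean_embedding {O : Type*} [Fintype O]
    (d : O → O → ℝ)
    (h0 : ∀ i j, d i j = 0 ↔ i = j)
    (hnn : ∀ i j, 0 ≤ d i j)
    (hsym : ∀ i j, d i j = d j i)
    (hult : ∀ i j k, d i j ≤ max (d i k) (d k j)) :
    ∃ y : O → EuclideanSpace ℝ (Fin (Fintype.card O)),
      ∀ i j, ‖y i - y j‖ ^ 2 = d i j := by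
  classical
  have hii : ∀ i, d i i = 0 := fun i => (h0 i i).mpr rfl
  -- find an upper bound D
  obtain ⟨D, hD⟩ : ∃ D : ℝ, ∀ p : O × O, d p.1 p.2 ≤ D := Finite.exists_le _
  set A : Matrix O O ℝ := Matrix.of (fun i j => (D - d i j) / 2) with hA
  have hpsd : A.PosSemidef := by
    refine Matrix.PosSemidef.of_dotProduct_mulVec_nonneg ?_ ?_
    · ext i j
      simp [hA, Matrix.conjTranspose, hsym i j]
    · intro x
      simp only [dotProduct, Matrix.mulVec, dotProduct, Pi.star_apply,
        star_trivial]
      have : ∑ i, x i * ∑ j, A i j * x j = (1/2) * ∑ i, ∑ j, x i * x j * (D - d i j) := by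
        rw [Finset.mul_sum]
        apply Finset.sum_congr rfl
        intro i _
        rw [Finset.mul_sum, Finset.mul_sum]
        apply Finset.sum_congr rfl
        intro j _
        simp [hA]
        ring
      rw [this]
      apply mul_nonneg (by norm_num)
      exact psd_aux (Finset.image₂ d univ univ).card d le_rfl hii hnn hsym hult D
        (fun i j => hD (i, j)) x
  open scoped MatrixOrder Matrix.Norms.L2Operator in
  obtain ⟨B, hB'⟩ := CStarAlgebra.nonneg_iff_eq_star_mul_self.mp hpsd.nonneg
  have hB : A = B.conjTranspose * B := hB'
  set e := Fintype.equivFin O with he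
  set y : O → EuclideanSpace ℝ (Fin (Fintype.card O)) := fun i => WithLp.toLp 2 (fun k => B (e.symm k) i) with hy
  refine ⟨y, ?_⟩
  intro i j
  have hsum : ∀ a b : O, ∑ k : Fin (Fintype.card O), y a k * y b k = A a b := by
    intro a b
    have h1 : A a b = (B.conjTranspose * B) a b := by rw [← hB]
    rw [h1, Matrix.mul_apply]
    simp only [Matrix.conjTranspose_apply, star_trivial]
    exact Fintype.sum_equiv e.symm _ _ (fun k => rfl)
  have hnorm : ‖y i - y j‖ ^ 2 = ∑ k : Fin (Fintype.card O), (y i k - y j k) ^ 2 := by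
    rw [EuclideanSpace.norm_eq, Real.sq_sqrt (by positivity)]
    apply Finset.sum_congr rfl
    intro k _
    rw [Real.norm_eq_abs, sq_abs]
    congr 1
  rw [hnorm]
  have expand : ∑ k : Fin (Fintype.card O), (y i k - y j k) ^ 2 =
      A i i + A j j - 2 * A i j := by
    have h2 : ∀ k : Fin (Fintype.card O), (y i k - y j k) ^ 2 =
        y i k * y i k + y j k * y j k - 2 * (y i k * y j k) := by intro k; ring
    rw [Finset.sum_congr rfl (fun k _ => h2 k)]
    rw [Finset.sum_sub_distrib, Finset.sum_add_distrib, ← Finset.mul_sum]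
    rw [hsum i i, hsum j j, hsum i j]
  rw [expand]
  simp only [hA, Matrix.of_apply, hii]
  ring
end

section
/- A symmetric matrix D with zero diagonal admits vectors y_1, ..., y_N with ‖y_i − y_j‖² = D_{ij} for all i,j if and only if the doubly centered matrix W = −(1/2) A D A is positive semidefinite, where A = I − (1/N) e eᵀ and e is the all-ones vector (classical multidimensional scaling / Schoenberg criterion). -/
open Matrix Finset

private lemma schoenberg_aux_expand {N : ℕ} (D : Matrix (Fin N) (Fin N) ℝ) :
    ((1 : Matrix (Fin N) (Fin N) ℝ) - (N : ℝ)⁻¹ • Matrix.of (fun _ _ => (1 : ℝ))) * D *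
      ((1 : Matrix (Fin N) (Fin N) ℝ) - (N : ℝ)⁻¹ • Matrix.of (fun _ _ => (1 : ℝ)))
    = D - (N : ℝ)⁻¹ • (Matrix.of (fun _ _ => (1 : ℝ)) * D)
        - (N : ℝ)⁻¹ • (D * Matrix.of (fun _ _ => (1 : ℝ)))
        + ((N : ℝ)⁻¹ * (N : ℝ)⁻¹) • (Matrix.of (fun _ _ => (1 : ℝ)) * D * Matrix.of (fun _ _ => (1 : ℝ))) := by
  simp only [Matrix.sub_mul, Matrix.mul_sub, Matrix.one_mul, Matrix.mul_one,
    Matrix.smul_mul, Matrix.mul_smul, smul_smul, Matrix.mul_assoc]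
  module

private lemma schoenberg_aux_entry {N : ℕ} (D : Matrix (Fin N) (Fin N) ℝ) (hsym : D.IsSymm)
    (i j : Fin N) :
    (((-(1 / 2) : ℝ) •
        (((1 : Matrix (Fin N) (Fin N) ℝ) - (N : ℝ)⁻¹ • Matrix.of (fun _ _ => (1 : ℝ))) * D *
          ((1 : Matrix (Fin N) (Fin N) ℝ) - (N : ℝ)⁻¹ • Matrix.of (fun _ _ => (1 : ℝ))))
        : Matrix (Fin N) (Fin N) ℝ)) i j
    = -(1 / 2) * (D i j - (N : ℝ)⁻¹ * (∑ k, D i k) - (N : ℝ)⁻¹ * (∑ k, D j k)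
        + (N : ℝ)⁻¹ * (N : ℝ)⁻¹ * (∑ k, ∑ l, D l k)) := by
  rw [schoenberg_aux_expand]
  have h1 : ((Matrix.of (fun _ _ => (1 : ℝ)) : Matrix (Fin N) (Fin N) ℝ) * D) i j = ∑ k, D j k := by
    simp only [Matrix.mul_apply, Matrix.of_apply, one_mul]
    exact Finset.sum_congr rfl fun k _ => hsym.apply j k
  have h2 : (D * (Matrix.of (fun _ _ => (1 : ℝ)) : Matrix (Fin N) (Fin N) ℝ)) i j = ∑ k, D i k := by
    simp [Matrix.mul_apply]
  have h3 : ((Matrix.of (fun _ _ => (1 : ℝ)) : Matrix (Fin N) (Fin N) ℝ) * D *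
      (Matrix.of (fun _ _ => (1 : ℝ)) : Matrix (Fin N) (Fin N) ℝ)) i j
      = ∑ k, ∑ l, D l k := by
    simp [Matrix.mul_apply]
  simp only [Matrix.smul_apply, Matrix.sub_apply, Matrix.add_apply, h1, h2, h3, smul_eq_mul]
  ring

private lemma schoenberg_aux_norm {d : ℕ} (x : EuclideanSpace ℝ (Fin d)) :
    ‖x‖ ^ 2 = ∑ k, (x k) ^ 2 := by
  rw [EuclideanSpace.norm_eq, Real.sq_sqrt (by positivity)]
  simp [sq_abs]

theorem schoenberg_mds_criterion {N : ℕ} (D : Matrix (Fin N) (Fin N) ℝ)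
    (hsym : D.IsSymm) (hdiag : ∀ i, D i i = 0) :
    (∃ (d : ℕ) (y : Fin N → EuclideanSpace ℝ (Fin d)),
        ∀ i j, ‖y i - y j‖ ^ 2 = D i j) ↔
      Matrix.PosSemidef
        ((-(1 / 2) : ℝ) •
          (((1 : Matrix (Fin N) (Fin N) ℝ) -
              (N : ℝ)⁻¹ • Matrix.of (fun _ _ => (1 : ℝ))) * D *
            ((1 : Matrix (Fin N) (Fin N) ℝ) -
              (N : ℝ)⁻¹ • Matrix.of (fun _ _ => (1 : ℝ))))) := by
  constructor
  · rintro ⟨d, y, hy⟩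
    rcases Nat.eq_zero_or_pos N with hN | hN
    · subst hN
      have h0 : ((-(1 / 2) : ℝ) •
          (((1 : Matrix (Fin 0) (Fin 0) ℝ) - ((0:ℕ) : ℝ)⁻¹ • Matrix.of (fun _ _ => (1 : ℝ))) * D *
            ((1 : Matrix (Fin 0) (Fin 0) ℝ) - ((0:ℕ) : ℝ)⁻¹ • Matrix.of (fun _ _ => (1 : ℝ))))) = 0 := by
        ext i _; exact i.elim0
      rw [h0]
      exact Matrix.PosSemidef.zero
    · have hNne : (N : ℝ) ≠ 0 := Nat.cast_ne_zero.mpr hN.ne'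
      set J : Matrix (Fin N) (Fin N) ℝ := Matrix.of (fun _ _ => (1 : ℝ)) with hJdef
      set A : Matrix (Fin N) (Fin N) ℝ := 1 - (N : ℝ)⁻¹ • J with hAdef
      set V : Matrix (Fin d) (Fin N) ℝ := Matrix.of (fun k i => y i k) with hVdef
      set c : Fin N → ℝ := fun i => ‖y i‖ ^ 2 with hcdef
      have hD : D = Matrix.diagonal c * J + J * Matrix.diagonal c - (2 : ℝ) • (Vᵀ * V) := by
        ext i j
        have h1 : (Matrix.diagonal c * J) i j = c i := by
          simp [hJdef, Matrix.mul_apply, Matrix.diagonal_apply]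
        have h2 : (J * Matrix.diagonal c) i j = c j := by
          simp [hJdef, Matrix.mul_apply, Matrix.diagonal_apply]
        have h3 : (Vᵀ * V) i j = ∑ k, y i k * y j k := by
          simp [hVdef, Matrix.mul_apply]
        rw [Matrix.sub_apply, Matrix.add_apply, Matrix.smul_apply, h1, h2, h3, ← hy i j,
          schoenberg_aux_norm]
        have hsub : ∀ k, (y i - y j) k = y i k - y j k := fun k => rfl
        simp only [hsub, hcdef, schoenberg_aux_norm, smul_eq_mul]
        rw [Finset.mul_sum, ← Finset.sum_add_distrib, ← Finset.sum_sub_distrib]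
        exact Finset.sum_congr rfl fun k _ => by ring
      have hJJ : J * J = (N : ℝ) • J := by
        ext i j
        simp [hJdef, Matrix.mul_apply, Finset.card_univ]
      have hJA : J * A = 0 := by
        rw [hAdef, Matrix.mul_sub, Matrix.mul_one, Matrix.mul_smul, hJJ, smul_smul,
          inv_mul_cancel₀ hNne, one_smul, sub_self]
      have hAJ : A * J = 0 := by
        rw [hAdef, Matrix.sub_mul, Matrix.one_mul, Matrix.smul_mul, hJJ, smul_smul,
          inv_mul_cancel₀ hNne, one_smul, sub_self]
      have h4 : A * (Matrix.diagonal c * J) * A = 0 := by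
        rw [Matrix.mul_assoc, Matrix.mul_assoc, hJA, Matrix.mul_zero, Matrix.mul_zero]
      have h5 : A * (J * Matrix.diagonal c) * A = 0 := by
        rw [← Matrix.mul_assoc, hAJ, Matrix.zero_mul, Matrix.zero_mul]
      have hADA : A * D * A = -((2 : ℝ) • (A * (Vᵀ * V) * A)) := by
        calc A * D * A
            = A * (Matrix.diagonal c * J) * A + A * (J * Matrix.diagonal c) * A
              - (2 : ℝ) • (A * (Vᵀ * V) * A) := by
              rw [hD]
              simp only [Matrix.mul_add, Matrix.add_mul, Matrix.mul_sub, Matrix.sub_mul,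
                Matrix.mul_smul, Matrix.smul_mul]
          _ = -((2 : ℝ) • (A * (Vᵀ * V) * A)) := by rw [h4, h5]; simp
      rw [hADA]
      have hsm : (-(1 / 2) : ℝ) • -((2 : ℝ) • (A * (Vᵀ * V) * A)) = A * (Vᵀ * V) * A := by
        rw [smul_neg, smul_smul]; norm_num
      rw [hsm]
      have hAT : Aᵀ = A := by
        rw [hAdef]
        ext i j
        simp [hJdef, Matrix.one_apply, eq_comm]
      have hform : A * (Vᵀ * V) * A = (V * A)ᴴ * (V * A) := by
        rw [Matrix.conjTranspose_mul, Matrix.conjTranspose_eq_transpose_of_trivial,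
          Matrix.conjTranspose_eq_transpose_of_trivial, hAT]
        rw [Matrix.mul_assoc, Matrix.mul_assoc, Matrix.mul_assoc]
      rw [hform]
      exact Matrix.posSemidef_conjTranspose_mul_self (V * A)
  · intro hW
    obtain ⟨B, hB⟩ : ∃ B : Matrix (Fin N) (Fin N) ℝ, ((-(1 / 2) : ℝ) •
          (((1 : Matrix (Fin N) (Fin N) ℝ) -
              (N : ℝ)⁻¹ • Matrix.of (fun _ _ => (1 : ℝ))) * D *
            ((1 : Matrix (Fin N) (Fin N) ℝ) -
              (N : ℝ)⁻¹ • Matrix.of (fun _ _ => (1 : ℝ))))) = Bᴴ * B := by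
      classical
      open scoped MatrixOrder in
      obtain ⟨X, hX, -, hXX⟩ :=
        CFC.exists_sqrt_of_isSelfAdjoint_of_quasispectrumRestricts hW.isHermitian
          (QuasispectrumRestricts.nnreal_of_nonneg hW.nonneg)
      exact ⟨X, by rw [← Matrix.star_eq_conjTranspose, hX.star_eq, hXX]; rfl⟩
    refine ⟨N, fun i => (WithLp.toLp 2 (fun k => B k i) : EuclideanSpace ℝ (Fin N)), ?_⟩
    intro i j
    have hBij : ∀ a b : Fin N, (Bᴴ * B) a b = ∑ k, B k a * B k b := by
      intro a b
      simp [Matrix.mul_apply, Matrix.conjTranspose_apply]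
    have e1 := schoenberg_aux_entry D hsym i i
    have e2 := schoenberg_aux_entry D hsym j j
    have e3 := schoenberg_aux_entry D hsym i j
    rw [hB, hBij] at e1 e2 e3
    rw [schoenberg_aux_norm]
    have hsub : ∀ k : Fin N, ((WithLp.toLp 2 (fun k => B k i) : EuclideanSpace ℝ (Fin N)) -
        (WithLp.toLp 2 (fun k => B k j) : EuclideanSpace ℝ (Fin N))) k = B k i - B k j := fun k => rfl
    simp only [hsub]
    have expand : ∑ k, (B k i - B k j) ^ 2
        = (∑ k, B k i * B k i) + (∑ k, B k j * B k j) - 2 * ∑ k, B k i * B k j := by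
      rw [Finset.mul_sum, ← Finset.sum_add_distrib, ← Finset.sum_sub_distrib]
      exact Finset.sum_congr rfl fun k _ => by ring
    rw [expand, e1, e2, e3, hdiag i, hdiag j]
    ring
end

section
/- For one-dimensional data, the Minimax distance between two points equals the largest gap between consecutive points lying between them: if x_1 ≤ ... ≤ x_N are reals with edge weights |x_p − x_q| on the complete graph, then for i < j, D^MM(x_i, x_j) = max_{i ≤ l < j} (x_{l+1} − x_l). -/
/-- Maximum edge weight along the path `i, p..., j` (the path through the
intermediate vertices listed in `p`). -/
def chainMax {O : Type*} (D : O → O → ℝ) : O → List O → O → ℝ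
  | i, [], j => D i j
  | i, k :: l, j => max (D i k) (chainMax D k l j)

/-- Minimax distance: the minimum over all paths from `i` to `j` (in the
complete graph on `O`) of the maximal edge weight along the path. -/
noncomputable def minimax {O : Type*} (D : O → O → ℝ) (i j : O) : ℝ :=
  sInf {m : ℝ | ∃ p : List O, m = chainMax D i p j}

/-- Every path from `i` to `j` crosses the gap `[l, l+1]`, so its chainMax is
at least the gap. -/
lemma gap_le_chainMax {N : ℕ} (x : Fin N → ℝ) (hmono : Monotone x)
    (l : ℕ) (hl : l + 1 < N) :
    ∀ (p : List (Fin N)) (i j : Fin N), (i : ℕ) ≤ l → l < (j : ℕ) →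
      x ⟨l + 1, hl⟩ - x ⟨l, Nat.lt_of_succ_lt hl⟩ ≤
        chainMax (fun p q => |x p - x q|) i p j := by
  intro p
  induction p with
  | nil =>
    intro i j hi hj
    have h1 : x i ≤ x ⟨l, Nat.lt_of_succ_lt hl⟩ := hmono (by simpa [Fin.le_def] using hi)
    have h2 : x ⟨l + 1, hl⟩ ≤ x j := hmono (by simpa [Fin.le_def] using hj)
    have : x ⟨l + 1, hl⟩ - x ⟨l, Nat.lt_of_succ_lt hl⟩ ≤ x j - x i := by linarith
    calc x ⟨l + 1, hl⟩ - x ⟨l, Nat.lt_of_succ_lt hl⟩ ≤ x j - x i := this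
      _ ≤ |x i - x j| := by rw [abs_sub_comm]; exact le_abs_self _
  | cons k rest ih =>
    intro i j hi hj
    show _ ≤ max (|x i - x k|) _
    by_cases hk : (k : ℕ) ≤ l
    · exact le_max_of_le_right (ih k j hk hj)
    · refine le_max_of_le_left ?_
      have h1 : x i ≤ x ⟨l, Nat.lt_of_succ_lt hl⟩ := hmono (by simpa [Fin.le_def] using hi)
      have h2 : x ⟨l + 1, hl⟩ ≤ x k := hmono (by simpa [Fin.le_def] using Nat.lt_of_not_le hk)
      calc x ⟨l + 1, hl⟩ - x ⟨l, Nat.lt_of_succ_lt hl⟩ ≤ x k - x i := by linarith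
        _ ≤ |x i - x k| := by rw [abs_sub_comm]; exact le_abs_self _

theorem minimax_one_dim_largest_gap {N : ℕ} (x : Fin N → ℝ)
    (hmono : Monotone x) (i j : Fin N) (hij : i < j) :
    minimax (fun p q => |x p - x q|) i j =
      sSup {g : ℝ | ∃ (l : ℕ) (h : l + 1 < N),
        (i : ℕ) ≤ l ∧ l < (j : ℕ) ∧
          g = x ⟨l + 1, h⟩ - x ⟨l, Nat.lt_of_succ_lt h⟩} := by
  classical
  set D := fun p q : Fin N => |x p - x q| with hD
  set T := {g : ℝ | ∃ (l : ℕ) (h : l + 1 < N),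
        (i : ℕ) ≤ l ∧ l < (j : ℕ) ∧
          g = x ⟨l + 1, h⟩ - x ⟨l, Nat.lt_of_succ_lt h⟩} with hTdef
  set S := {m : ℝ | ∃ p : List (Fin N), m = chainMax D i p j} with hSdef
  -- description of T as a finite image
  set f : ℕ → ℝ := fun l => if h : l + 1 < N then
      x ⟨l + 1, h⟩ - x ⟨l, Nat.lt_of_succ_lt h⟩ else 0 with hf
  have hT : T = f '' Set.Ico (i : ℕ) (j : ℕ) := by
    ext g
    constructor
    · rintro ⟨l, h, h1, h2, rfl⟩
      exact ⟨l, ⟨h1, h2⟩, by simp [hf, h]⟩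
    · rintro ⟨l, ⟨h1, h2⟩, rfl⟩
      have h : l + 1 < N := lt_of_le_of_lt (Nat.succ_le_of_lt h2) j.isLt
      exact ⟨l, h, h1, h2, by simp [hf, h]⟩
  have hTfin : T.Finite := by rw [hT]; exact (Set.finite_Ico _ _).image _
  have hTne : T.Nonempty := by
    rw [hT]
    exact ⟨f i, ⟨i, ⟨le_rfl, hij⟩, rfl⟩⟩
  have hTmem : sSup T ∈ T := hTne.csSup_mem hTfin
  have hTbdd : BddAbove T := hTfin.bddAbove
  -- lower bound : every element of S is ≥ sSup T
  have hlow : ∀ m ∈ S, sSup T ≤ m := by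
    rintro m ⟨p, rfl⟩
    obtain ⟨l, h, h1, h2, heq⟩ := hTmem
    rw [heq]
    exact gap_le_chainMax x hmono l h p i j h1 h2
  have hSne : S.Nonempty := ⟨D i j, [], rfl⟩
  -- upper bound : there is a path with chainMax ≤ sSup T
  have hgap : ∀ l (h : l + 1 < N), (i : ℕ) ≤ l → l < (j : ℕ) →
      x ⟨l + 1, h⟩ - x ⟨l, Nat.lt_of_succ_lt h⟩ ≤ sSup T :=
    fun l h h1 h2 => le_csSup hTbdd ⟨l, h, h1, h2, rfl⟩
  have hup : ∀ (n : ℕ) (a : Fin N), (j : ℕ) - (a : ℕ) = n → (i : ℕ) ≤ (a : ℕ) →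
      (a : ℕ) < (j : ℕ) → ∃ p, chainMax D a p j ≤ sSup T := by
    intro n
    induction n with
    | zero => intro a h0 _ hlt; omega
    | succ n ih =>
      intro a h0 hia haj
      have hN : (a : ℕ) + 1 < N := lt_of_le_of_lt (Nat.succ_le_of_lt haj) j.isLt
      set b : Fin N := ⟨(a : ℕ) + 1, hN⟩ with hb
      have hxab : x a ≤ x b := hmono (by simp [Fin.le_def, hb])
      have hDab : D a b ≤ sSup T := by
        have hab : D a b = x b - x a := by
          show |x a - x b| = x b - x a
          rw [abs_sub_comm, abs_of_nonneg (sub_nonneg.2 hxab)]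
        rw [hab, hb]
        exact hgap (a : ℕ) hN hia haj
      by_cases hbj : (b : ℕ) = (j : ℕ)
      · have : b = j := Fin.ext hbj
        subst this
        exact ⟨[], hDab⟩
      · have hbj' : (b : ℕ) < (j : ℕ) := lt_of_le_of_ne haj hbj
        obtain ⟨p, hp⟩ := ih b (by simp [hb]; omega) (by simp [hb]; omega) hbj'
        exact ⟨b :: p, max_le hDab hp⟩
  obtain ⟨p, hp⟩ := hup ((j : ℕ) - (i : ℕ)) i rfl le_rfl hij
  refine le_antisymm ?_ (le_csInf hSne hlow)
  calc sInf S ≤ chainMax D i p j := csInf_le ⟨sSup T, fun m hm => hlow m hm⟩ ⟨p, rfl⟩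
    _ ≤ sSup T := hp
end

section
/- Incremental Minimax nearest-neighbor correctness: let G be a finite weighted graph with vertex set O ∪ {v}, and suppose S ⊆ O is a set such that every element of S has Minimax distance to v no larger than every element of O \ S (i.e., S consists of the |S| Minimax-nearest neighbors of v). Let u ∈ O \ S be a vertex minimizing the direct edge weight to the set {v} ∪ S, i.e., min_{p ∈ {v} ∪ S} D(p, u) is minimal among all unselected vertices. Then u attains the minimum Minimax distance to v among all vertices in O \ S, so S ∪ {u} consists of the |S|+1 Minimax-nearest neighbors of v. -/
lemma chainMax_append {V : Type*} (D : V → V → ℝ)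
    (l : List V) (i k j : V) : chainMax D i (l ++ [k]) j = max (chainMax D i l k) (D k j) := by
  induction l generalizing i with
  | nil => rfl
  | cons a l ih =>
      show max (D i a) (chainMax D a (l ++ [k]) j) = _
      rw [ih a]
      show _ = max (max (D i a) (chainMax D a l k)) (D k j)
      rw [max_assoc]

lemma chainMax_mem {V : Type*} [Fintype V] [DecidableEq V] (D : V → V → ℝ) :
    ∀ (l : List V) (i j : V),
      chainMax D i l j ∈ (Finset.image₂ D Finset.univ Finset.univ : Finset ℝ)
  | [], i, j => Finset.mem_image₂_of_mem (Finset.mem_univ i) (Finset.mem_univ j)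
  | a :: l, i, j => by
      have h1 : D i a ∈ (Finset.image₂ D Finset.univ Finset.univ : Finset ℝ) :=
        Finset.mem_image₂_of_mem (Finset.mem_univ i) (Finset.mem_univ a)
      have h2 := chainMax_mem D l a j
      have h : chainMax D i (a :: l) j = max (D i a) (chainMax D a l j) := rfl
      rw [h]
      rcases max_cases (D i a) (chainMax D a l j) with ⟨h, _⟩ | ⟨h, _⟩ <;> rw [h] <;>
        assumption

lemma minimax_set_finite {V : Type*} [Fintype V] [DecidableEq V] (D : V → V → ℝ) (i j : V) :
    {m : ℝ | ∃ p : List V, m = chainMax D i p j}.Finite := by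
  apply Set.Finite.subset (Finset.image₂ D Finset.univ Finset.univ : Finset ℝ).finite_toSet
  rintro m ⟨p, rfl⟩
  exact chainMax_mem D p i j

lemma minimax_set_nonempty {V : Type*} (D : V → V → ℝ) (i j : V) :
    {m : ℝ | ∃ p : List V, m = chainMax D i p j}.Nonempty :=
  ⟨D i j, [], rfl⟩

lemma minimax_le_chainMax {V : Type*} [Fintype V] [DecidableEq V] (D : V → V → ℝ)
    (i j : V) (l : List V) : minimax D i j ≤ chainMax D i l j :=
  csInf_le (minimax_set_finite D i j).bddBelow ⟨l, rfl⟩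

lemma exists_minimax_path {V : Type*} [Fintype V] [DecidableEq V] (D : V → V → ℝ)
    (i j : V) : ∃ l : List V, minimax D i j = chainMax D i l j :=
  (minimax_set_nonempty D i j).csInf_mem (minimax_set_finite D i j)

theorem incremental_minimax_nn {V : Type*} [Fintype V] [DecidableEq V]
    (D : V → V → ℝ) (hsym : ∀ i j, D i j = D j i) (hnn : ∀ i j, 0 ≤ D i j)
    (hpos : ∀ i j, i ≠ j → 0 < D i j)
    (v : V) (S : Finset V) (hvS : v ∉ S)
    -- `S` consists of the `|S|` Minimax-nearest neighbors of `v`: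
    (hS : ∀ p ∈ S, ∀ q : V, q ≠ v → q ∉ S → minimax D v p ≤ minimax D v q)
    (u : V) (hu : u ≠ v) (huS : u ∉ S)
    -- `u` minimizes the direct edge weight to the set `{v} ∪ S`:
    (hmin : ∀ q : V, q ≠ v → q ∉ S →
      (insert v S).inf' (Finset.insert_nonempty v S) (fun p => D p u) ≤
        (insert v S).inf' (Finset.insert_nonempty v S) (fun p => D p q)) :
    ∀ q : V, q ≠ v → q ∉ S → minimax D v u ≤ minimax D v q := by
  intro q hqv hqS
  -- key lower bound: any path from a vertex of `insert v S` to an unselected vertex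
  -- has max edge weight ≥ the inf for `u`
  have key : ∀ (l : List V) (i : V), i ∈ insert v S →
      (insert v S).inf' (Finset.insert_nonempty v S) (fun p => D p u) ≤ chainMax D i l q := by
    intro l
    induction l with
    | nil =>
        intro i hi
        have h1 : (insert v S).inf' (Finset.insert_nonempty v S) (fun p => D p q) ≤ D i q :=
          Finset.inf'_le _ hi
        exact le_trans (hmin q hqv hqS) h1
    | cons k l ih =>
        intro i hi
        show _ ≤ max (D i k) (chainMax D k l q)
        by_cases hk : k ∈ insert v S
        · exact le_trans (ih k hk) (le_max_right _ _)
        · have hkv : k ≠ v := by intro h; exact hk (h ▸ Finset.mem_insert_self v S)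
          have hkS : k ∉ S := fun h => hk (Finset.mem_insert_of_mem h)
          have h1 : (insert v S).inf' (Finset.insert_nonempty v S) (fun p => D p k) ≤ D i k :=
            Finset.inf'_le _ hi
          exact le_trans (le_trans (hmin k hkv hkS) h1) (le_max_left _ _)
  have hq_lb : (insert v S).inf' (Finset.insert_nonempty v S) (fun p => D p u) ≤
      minimax D v q := by
    apply le_csInf (minimax_set_nonempty D v q)
    rintro m ⟨l, rfl⟩
    exact key l v (Finset.mem_insert_self v S)
  -- pick p attaining the inf
  obtain ⟨p, hpT, hpa⟩ := Finset.exists_mem_eq_inf' (Finset.insert_nonempty v S)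
    (fun p => D p u)
  rw [hpa] at hq_lb
  rcases Finset.mem_insert.mp hpT with hpv | hpS
  · -- p = v : direct edge
    have h0 : minimax D v u ≤ D v u := minimax_le_chainMax D v u []
    rw [hpv] at hq_lb
    exact le_trans h0 hq_lb
  · obtain ⟨l, hl⟩ := exists_minimax_path D v p
    have h1 : minimax D v u ≤ chainMax D v (l ++ [p]) u := minimax_le_chainMax D v u _
    rw [chainMax_append] at h1
    refine le_trans h1 (max_le ?_ ?_)
    · rw [← hl]; exact hS p hpS q hqv hqS
    · exact hq_lb
end
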